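/- Let I be a Hausdorff, locally connected, first-countable topological space, P ⊆ I a closed subset, and Φ : I → I a homeomorphism with Φ(P) = P. Let η : [0,∞) → [0,∞) be a homeomorphism with η(t) < t for every t > 0. Let X := (I × [0,∞)) ∖ (P × {0}) with the subspace topology, let γ : X → X be the homeomorphism γ(x,t) = (Φ(x), η(t)), and let F : X → ℝ be a continuous proper map (preimages of compact sets are compact) satisfying F(γ(z)) = F(z) + 1 for all z ∈ X. Define f : I ∖ P → ℝ by f(x) := F(x,0) and set C := P ∪ { x ∈ I ∖ P : f(x) ≥ 0 }. Then C is a compact subset of I and P is contained in the topological interior of C. -/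

import Mathlib

open Set Filter
open scoped NNReal
open scoped Topology

/-- in the same setting, with f(x) := F(x,0) on I ∖ P and
C := P ∪ {f ≥ 0}, the set C is compact and P is contained in its interior.
Here [0,∞) is modelled by ℝ≥0. -/
theorem stmt14 {I : Type*} [TopologicalSpace I] [T2Space I]
    [LocallyConnectedSpace I] [FirstCountableTopology I]
    (P : Set I) (hP : IsClosed P)
    (Φ : I ≃ₜ I) (hΦP : Φ '' P = P)
    (η : ℝ≥0 ≃ₜ ℝ≥0) (hη : ∀ t : ℝ≥0, 0 < t → η t < t)
    (Xs : Set (I × ℝ≥0)) (hXs : Xs = {z : I × ℝ≥0 | ¬(z.1 ∈ P ∧ z.2 = 0)})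
    (F : I × ℝ≥0 → ℝ)
    (hFc : ContinuousOn F Xs)
    (hFprop : ∀ K : Set ℝ, IsCompact K → IsCompact (Xs ∩ F ⁻¹' K))
    (hFeq : ∀ z ∈ Xs, F (Φ z.1, η z.2) = F z + 1)
    (C : Set I) (hC : C = P ∪ {x : I | x ∉ P ∧ 0 ≤ F (x, 0)}) :
    IsCompact C ∧ P ⊆ interior C := by
  classical
  -- membership helpers
  have hmem : ∀ (x : I) (t : ℝ≥0), (x, t) ∈ Xs ↔ ¬(x ∈ P ∧ t = 0) := by
    intro x t; rw [hXs]; rfl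
  have hmemt : ∀ (x : I) (t : ℝ≥0), t ≠ 0 → (x, t) ∈ Xs :=
    fun x t ht => (hmem x t).2 fun h => ht h.2
  have hmem0 : ∀ x : I, x ∉ P → (x, (0 : ℝ≥0)) ∈ Xs :=
    fun x hx => (hmem x 0).2 fun h => hx h.1
  -- η basics
  have hη0 : η 0 = 0 := by
    have h1 : Tendsto (⇑η) (𝓝[>] (0 : ℝ≥0)) (𝓝 0) := by
      apply tendsto_of_tendsto_of_tendsto_of_le_of_le' (tendsto_const_nhds)
        (tendsto_id.mono_left nhdsWithin_le_nhds)
      · filter_upwards with t using zero_le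
      · filter_upwards [self_mem_nhdsWithin] with t ht using (hη t ht).le
    have h2 : Tendsto (⇑η) (𝓝[>] (0 : ℝ≥0)) (𝓝 (η 0)) :=
      (η.continuous.tendsto 0).mono_left nhdsWithin_le_nhds
    exact tendsto_nhds_unique h2 h1
  have hηle : ∀ t, η t ≤ t := by
    intro t
    rcases eq_or_lt_of_le (zero_le (a := t)) with h | h
    · rw [← h, hη0]
    · exact (hη t h).le
  have hηiterle : ∀ (n : ℕ) (t : ℝ≥0), (⇑η)^[n] t ≤ t := by
    intro n t; induction n with
    | zero => simp
    | succ n ih => rw [Function.iterate_succ_apply']; exact (hηle _).trans ih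
  have hηne : ∀ t : ℝ≥0, t ≠ 0 → η t ≠ 0 := fun t ht h =>
    ht (η.injective (h.trans hη0.symm))
  have hηiterne : ∀ (n : ℕ) (t : ℝ≥0), t ≠ 0 → (⇑η)^[n] t ≠ 0 := by
    intro n t ht; induction n with
    | zero => simpa using ht
    | succ n ih => rw [Function.iterate_succ_apply']; exact hηne _ ih
  have hηs0 : η.symm 0 = 0 := by
    have := congrArg η.symm hη0
    rw [η.symm_apply_apply] at this
    exact this.symm
  have hηsne : ∀ s : ℝ≥0, s ≠ 0 → η.symm s ≠ 0 := by
    intro s hs h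
    apply hs
    have := congrArg η h
    rwa [η.apply_symm_apply, hη0] at this
  have hηsiterne : ∀ (n : ℕ) (s : ℝ≥0), s ≠ 0 → (⇑η.symm)^[n] s ≠ 0 := by
    intro n s hs; induction n with
    | zero => simpa using hs
    | succ n ih => rw [Function.iterate_succ_apply']; exact hηsne _ ih
  have hinv : ∀ (n : ℕ) (t : ℝ≥0), (⇑η)^[n] ((⇑η.symm)^[n] t) = t := by
    intro n t
    exact (Function.LeftInverse.iterate η.apply_symm_apply n) t
  -- P invariance
  have hPfwd : ∀ x ∈ P, Φ x ∈ P := fun x hx => hΦP ▸ ⟨x, hx, rfl⟩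
  have hPbwd : ∀ x : I, Φ x ∈ P → x ∈ P := by
    intro x hx
    rw [← hΦP] at hx
    rcases hx with ⟨y, hy, hxy⟩
    rwa [← Φ.injective hxy]
  have hPiter : ∀ (n : ℕ) (x : I), x ∈ P → (⇑Φ)^[n] x ∈ P := by
    intro n x hx; induction n with
    | zero => simpa using hx
    | succ n ih => rw [Function.iterate_succ_apply']; exact hPfwd _ ih
  -- forward step and iteration
  have hfwd : ∀ (x : I) (t : ℝ≥0), (x, t) ∈ Xs → (Φ x, η t) ∈ Xs := by
    intro x t h
    refine (hmem _ _).2 fun hc => ?_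
    exact (hmem x t).1 h ⟨hPbwd x hc.1, η.injective (hc.2.trans hη0.symm)⟩
  have hIter : ∀ (n : ℕ) (x : I) (t : ℝ≥0), (x, t) ∈ Xs →
      ((⇑Φ)^[n] x, (⇑η)^[n] t) ∈ Xs ∧
        F ((⇑Φ)^[n] x, (⇑η)^[n] t) = F (x, t) + n := by
    intro n x t h; induction n with
    | zero => simpa using h
    | succ n ih =>
      obtain ⟨h1, h2⟩ := ih
      constructor
      · rw [Function.iterate_succ_apply', Function.iterate_succ_apply']
        exact hfwd _ _ h1
      · rw [Function.iterate_succ_apply', Function.iterate_succ_apply']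
        have := hFeq _ h1
        rw [this, h2]
        push_cast; ring
  -- backward step and iteration
  have hbwd : ∀ (x : I) (t : ℝ≥0), (x, t) ∈ Xs →
      (Φ.symm x, η.symm t) ∈ Xs ∧ F (Φ.symm x, η.symm t) = F (x, t) - 1 := by
    intro x t h
    have hm : (Φ.symm x, η.symm t) ∈ Xs := by
      refine (hmem _ _).2 fun hc => ?_
      refine (hmem x t).1 h ⟨?_, ?_⟩
      · have := hPfwd _ hc.1; rwa [Φ.apply_symm_apply] at this
      · have := congrArg η hc.2; rwa [η.apply_symm_apply, hη0] at this
    have := hFeq (Φ.symm x, η.symm t) hm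
    simp only [Φ.apply_symm_apply, η.apply_symm_apply] at this
    exact ⟨hm, by linarith⟩
  have hIterB : ∀ (n : ℕ) (x : I) (t : ℝ≥0), (x, t) ∈ Xs →
      ((⇑Φ.symm)^[n] x, (⇑η.symm)^[n] t) ∈ Xs ∧
        F ((⇑Φ.symm)^[n] x, (⇑η.symm)^[n] t) = F (x, t) - n := by
    intro n x t h; induction n with
    | zero => simpa using h
    | succ n ih =>
      obtain ⟨h1, h2⟩ := ih
      obtain ⟨h3, h4⟩ := hbwd _ _ h1
      constructor
      · rw [Function.iterate_succ_apply', Function.iterate_succ_apply']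
        exact h3
      · rw [Function.iterate_succ_apply', Function.iterate_succ_apply']
        rw [h4, h2]
        push_cast; ring
  -- Lemma T : large F forces small second coordinate
  obtain ⟨T, hT⟩ : ∃ T : ℝ≥0, ∀ z ∈ Xs, 1 ≤ F z → z.2 ≤ T := by
    obtain ⟨T, hTb⟩ := ((hFprop (Icc 1 2) isCompact_Icc).image continuous_snd).bddAbove
    refine ⟨T, fun z hz h1 => ?_⟩
    set n := ⌊F z - 1⌋₊ with hn
    have hz' : (z.1, z.2) ∈ Xs := by rwa [Prod.mk.eta]
    obtain ⟨hw, hFw⟩ := hIterB n z.1 z.2 hz'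
    have hfl : (n : ℝ) ≤ F z - 1 := Nat.floor_le (by linarith)
    have hfl2 : F z - 1 < n + 1 := Nat.lt_floor_add_one _
    have hwM : ((⇑Φ.symm)^[n] z.1, (⇑η.symm)^[n] z.2) ∈ Xs ∩ F ⁻¹' Icc 1 2 := by
      refine ⟨hw, ?_⟩
      rw [mem_preimage, hFw]
      constructor <;> [skip; skip]
      · simp only [Prod.mk.eta]; linarith
      · simp only [Prod.mk.eta]; linarith
    have hle : (⇑η.symm)^[n] z.2 ≤ T := hTb ⟨_, hwM, rfl⟩
    calc z.2 = (⇑η)^[n] ((⇑η.symm)^[n] z.2) := (hinv n z.2).symm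
      _ ≤ (⇑η.symm)^[n] z.2 := hηiterle n _
      _ ≤ T := hle
  -- fiber continuity
  have hfib : ∀ (x : I) (s : Set ℝ≥0), (∀ t ∈ s, (x, t) ∈ Xs) →
      ContinuousOn (fun t => F (x, t)) s := by
    intro x s hs
    exact hFc.comp (Continuous.continuousOn (by fun_prop)) hs
  have hcontiter : ∀ n : ℕ, Continuous fun s : ℝ≥0 => (⇑η.symm)^[n] s := by
    intro n
    induction n with
    | zero => exact continuous_id
    | succ n ih =>
      have heq : (fun s : ℝ≥0 => (⇑η.symm)^[n + 1] s)
          = fun s : ℝ≥0 => η.symm ((⇑η.symm)^[n] s) := by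
        funext s; rw [Function.iterate_succ_apply']
      rw [heq]
      exact η.symm.continuous.comp ih
  have h0fix : ∀ n : ℕ, (⇑η.symm)^[n] (0 : ℝ≥0) = 0 := by
    intro n
    induction n with
    | zero => simp
    | succ n ih => rw [Function.iterate_succ_apply', ih, hηs0]
  -- per-fiber lemma: on fibers over P, F exceeds 1 at arbitrarily small heights
  have hPfiber : ∀ x ∈ P, ∀ δ : ℝ≥0, 0 < δ → ∃ t : ℝ≥0, 0 < t ∧ t < δ ∧ 1 < F (x, t) := by
    intro x hx δ hδ
    by_contra hcon
    push_neg at hcon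
    -- Step 1: F (x, ·) → -∞ as t → 0⁺
    have hbot : Tendsto (fun t : ℝ≥0 => F (x, t)) (𝓝[>] 0) atBot := by
      rw [tendsto_atBot]
      intro b
      have hS : IsCompact (Xs ∩ F ⁻¹' Icc (b - 1) 1) := hFprop _ isCompact_Icc
      have hnot : (x, (0 : ℝ≥0)) ∉ Xs ∩ F ⁻¹' Icc (b - 1) 1 := fun h =>
        (hmem x 0).1 h.1 ⟨hx, rfl⟩
      have hev : ∀ᶠ t : ℝ≥0 in 𝓝 0, (x, t) ∉ Xs ∩ F ⁻¹' Icc (b - 1) 1 := by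
        have hct : ContinuousAt (fun t : ℝ≥0 => (x, t)) 0 := by fun_prop
        exact hct (hS.isClosed.isOpen_compl.mem_nhds hnot)
      have hev2 : ∀ᶠ t : ℝ≥0 in 𝓝 0, t < δ := tendsto_id.eventually_lt_const hδ
      filter_upwards [hev.filter_mono nhdsWithin_le_nhds,
        hev2.filter_mono nhdsWithin_le_nhds, self_mem_nhdsWithin] with t h1 h2 h3
      have hFt : F (x, t) ≤ 1 := hcon t h3 h2
      by_contra hb
      push_neg at hb
      exact h1 ⟨hmemt x t (ne_of_gt h3), by constructor <;> [linarith; linarith]⟩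
    -- Step 2: same for every forward-iterated fiber
    have hbotn : ∀ n : ℕ, Tendsto (fun s : ℝ≥0 => F ((⇑Φ)^[n] x, s)) (𝓝[>] 0) atBot := by
      intro n
      have hcont : Continuous fun s : ℝ≥0 => (⇑η.symm)^[n] s := hcontiter n
      have h0fix : (⇑η.symm)^[n] (0 : ℝ≥0) = 0 := h0fix n
      have hmap : Tendsto (fun s : ℝ≥0 => (⇑η.symm)^[n] s) (𝓝[>] 0) (𝓝[>] 0) := by
        apply tendsto_nhdsWithin_of_tendsto_nhds_of_eventually_within
        · have := hcont.tendsto 0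
          rw [h0fix] at this
          exact this.mono_left nhdsWithin_le_nhds
        · filter_upwards [self_mem_nhdsWithin] with s hs
          exact pos_iff_ne_zero.mpr (hηsiterne n s (ne_of_gt hs))
      have hcomp : Tendsto (fun s : ℝ≥0 => F (x, (⇑η.symm)^[n] s)) (𝓝[>] 0) atBot :=
        hbot.comp hmap
      have haux : Tendsto (fun s : ℝ≥0 => F (x, (⇑η.symm)^[n] s) + (n : ℝ)) (𝓝[>] 0) atBot :=
        tendsto_atBot_add_const_right _ _ hcomp
      refine haux.congr' ?_
      filter_upwards [self_mem_nhdsWithin] with s hs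
      obtain ⟨h1, h2⟩ := hIter n x ((⇑η.symm)^[n] s) (hmemt _ _ (hηsiterne n s (ne_of_gt hs)))
      rw [hinv n s] at h2
      exact h2.symm
    -- Step 3: the compact level set over P stays away from height 0
    set v := F (x, 1) with hv
    set A := (Xs ∩ F ⁻¹' {v}) ∩ P ×ˢ (univ : Set ℝ≥0) with hA
    have hAcomp : IsCompact A :=
      (hFprop {v} isCompact_singleton).inter_right (hP.prod isClosed_univ)
    have hApos : ∀ z ∈ A, z.2 ≠ 0 := by
      rintro ⟨a, s⟩ ⟨⟨hzx, -⟩, hzp, -⟩ h0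
      exact (hmem a s).1 hzx ⟨hzp, h0⟩
    obtain ⟨m, hm0, hmA⟩ : ∃ m : ℝ≥0, 0 < m ∧ ∀ z ∈ A, m ≤ z.2 := by
      have hcl : IsClosed (Prod.snd '' A) := (hAcomp.image continuous_snd).isClosed
      have h0n : (0 : ℝ≥0) ∉ Prod.snd '' A := by
        rintro ⟨z, hz, hz0⟩
        exact hApos z hz hz0
      obtain ⟨u, hu, hus⟩ :=
        exists_Ico_subset_of_mem_nhds (hcl.isOpen_compl.mem_nhds h0n) ⟨1, one_pos⟩
      refine ⟨u, hu, fun z hz => ?_⟩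
      by_contra hlt
      push_neg at hlt
      exact hus ⟨zero_le, hlt⟩ ⟨z, hz, rfl⟩
    -- Step 4: choose n with η^[n] 1 < m
    obtain ⟨n, hnm⟩ : ∃ n : ℕ, (⇑η)^[n] (1 : ℝ≥0) < m := by
      have hanti : Antitone fun n : ℕ => (⇑η)^[n] (1 : ℝ≥0) :=
        antitone_nat_of_succ_le fun n => by
          rw [Function.iterate_succ_apply']; exact hηle _
      have hbdd : BddBelow (range fun n : ℕ => (⇑η)^[n] (1 : ℝ≥0)) :=
        ⟨0, fun y _ => zero_le⟩
      have htend := tendsto_atTop_ciInf hanti hbdd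
      set L := ⨅ n : ℕ, (⇑η)^[n] (1 : ℝ≥0) with hL
      have hηL : η L = L := by
        have h1 : Tendsto (fun n : ℕ => η ((⇑η)^[n] 1)) atTop (𝓝 (η L)) :=
          (η.continuous.tendsto L).comp htend
        have h2 : Tendsto (fun n : ℕ => (⇑η)^[n + 1] (1 : ℝ≥0)) atTop (𝓝 L) :=
          htend.comp (tendsto_add_atTop_nat 1)
        have heq : (fun n : ℕ => η ((⇑η)^[n] 1)) = fun n : ℕ => (⇑η)^[n + 1] (1 : ℝ≥0) := by
          funext n; rw [Function.iterate_succ_apply']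
        rw [heq] at h1
        exact tendsto_nhds_unique h1 h2
      have hL0 : L = 0 := by
        by_contra h
        exact absurd hηL (ne_of_lt (hη L (pos_iff_ne_zero.mpr h)))
      rw [hL0] at htend
      exact (htend.eventually_lt_const hm0).exists
    -- Step 5: intermediate value theorem on the fiber over Φ^[n] x
    have h1Xs : (x, (1 : ℝ≥0)) ∈ Xs := hmemt x 1 one_ne_zero
    obtain ⟨hnXs, hnF⟩ := hIter n x 1 h1Xs
    have hηn1pos : (0 : ℝ≥0) < (⇑η)^[n] 1 :=
      pos_iff_ne_zero.mpr (hηiterne n 1 one_ne_zero)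
    obtain ⟨a, ⟨ha1, ha2⟩, ha3⟩ :
        ∃ a : ℝ≥0, (0 < a ∧ a < (⇑η)^[n] 1) ∧ F ((⇑Φ)^[n] x, a) < v := by
      have h1 : ∀ᶠ s : ℝ≥0 in 𝓝[>] 0, F ((⇑Φ)^[n] x, s) < v :=
        (hbotn n).eventually (eventually_lt_atBot v)
      have h2 : ∀ᶠ s : ℝ≥0 in 𝓝[>] 0, s < (⇑η)^[n] 1 :=
        (tendsto_id.eventually_lt_const hηn1pos).filter_mono nhdsWithin_le_nhds
      obtain ⟨a, ha, hb, hc⟩ := (eventually_mem_nhdsWithin.and (h2.and h1)).exists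
      exact ⟨a, ⟨ha, hb⟩, hc⟩
    have hcontf : ContinuousOn (fun s : ℝ≥0 => F ((⇑Φ)^[n] x, s)) (Icc a ((⇑η)^[n] 1)) :=
      hfib _ _ fun t ht => hmemt _ _ (ne_of_gt (lt_of_lt_of_le ha1 ht.1))
    have hval : v ∈ Icc (F ((⇑Φ)^[n] x, a)) (F ((⇑Φ)^[n] x, (⇑η)^[n] 1)) := by
      constructor
      · exact ha3.le
      · rw [hnF]
        have : (0 : ℝ) ≤ (n : ℝ) := Nat.cast_nonneg n
        linarith
    obtain ⟨s, hsmem, hsF⟩ := intermediate_value_Icc ha2.le hcontf hval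
    have hsA : ((⇑Φ)^[n] x, s) ∈ A := by
      refine ⟨⟨hmemt _ _ (ne_of_gt (lt_of_lt_of_le ha1 hsmem.1)), hsF⟩, ?_, trivial⟩
      exact hPiter n x hx
    have h1 : m ≤ s := hmA _ hsA
    have h2 : s ≤ (⇑η)^[n] 1 := hsmem.2
    exact absurd hnm (not_lt.mpr (h1.trans h2))
  -- C is closed
  have hCclosed : IsClosed C := by
    rw [hC, ← isOpen_compl_iff]
    have hcompl : (P ∪ {x : I | x ∉ P ∧ 0 ≤ F (x, 0)})ᶜ
        = Pᶜ ∩ ((fun x : I => F (x, 0)) ⁻¹' Iio 0) := by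
      ext x
      by_cases hx : x ∈ P <;> simp [hx, not_le]
    rw [hcompl]
    have hcO : ContinuousOn (fun x : I => F (x, 0)) Pᶜ :=
      hFc.comp (Continuous.continuousOn (by fun_prop)) fun x hx => hmem0 x hx
    exact hcO.isOpen_inter_preimage hP.isOpen_compl isOpen_Iio
  -- the compact core D
  have hD : IsCompact (Prod.fst '' (Xs ∩ F ⁻¹' Icc 0 1)) :=
    (hFprop _ isCompact_Icc).image continuous_fst
  have hFT1 : ∀ x : I, F (x, T + 1) < 1 := by
    intro x
    by_contra h
    push_neg at h
    have hm : (x, T + 1) ∈ Xs := hmemt x (T + 1) (by positivity)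
    have := hT (x, T + 1) hm h
    simp only at this
    exact absurd this (by simp)
  have hsubD : C ⊆ Prod.fst '' (Xs ∩ F ⁻¹' Icc 0 1) := by
    rw [hC]
    rintro x (hx | ⟨hxP, hxF⟩)
    · obtain ⟨t₀, ht₀, ht₀1, ht₀F⟩ := hPfiber x hx 1 one_pos
      have hle : t₀ ≤ T + 1 := le_trans ht₀1.le le_add_self
      have hcontf : ContinuousOn (fun t : ℝ≥0 => F (x, t)) (Icc t₀ (T + 1)) :=
        hfib _ _ fun t ht => hmemt _ _ (ne_of_gt (lt_of_lt_of_le ht₀ ht.1))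
      have hval : (1 : ℝ) ∈ Icc (F (x, T + 1)) (F (x, t₀)) := ⟨(hFT1 x).le, ht₀F.le⟩
      obtain ⟨s, hsmem, hsF⟩ := intermediate_value_Icc' hle hcontf hval
      exact ⟨(x, s), ⟨hmemt _ _ (ne_of_gt (lt_of_lt_of_le ht₀ hsmem.1)),
        by rw [mem_preimage, show F (x, s) = 1 from hsF]; exact ⟨zero_le_one, le_refl 1⟩⟩, rfl⟩
    · by_cases h1 : F (x, 0) ≤ 1
      · exact ⟨(x, 0), ⟨hmem0 x hxP, ⟨hxF, h1⟩⟩, rfl⟩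
      · push_neg at h1
        have hcontf : ContinuousOn (fun t : ℝ≥0 => F (x, t)) (Icc 0 (T + 1)) := by
          refine hfib _ _ fun t _ => ?_
          by_cases ht : t = 0
          · rw [ht]; exact hmem0 x hxP
          · exact hmemt _ _ ht
        have hval : (1 : ℝ) ∈ Icc (F (x, T + 1)) (F (x, 0)) := ⟨(hFT1 x).le, h1.le⟩
        obtain ⟨s, hsmem, hsF⟩ := intermediate_value_Icc' (zero_le) hcontf hval
        refine ⟨(x, s), ⟨?_, by rw [mem_preimage, show F (x, s) = 1 from hsF]; exact ⟨zero_le_one, le_refl 1⟩⟩, rfl⟩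
        by_cases hs0 : s = 0
        · rw [hs0]; exact hmem0 x hxP
        · exact hmemt _ _ hs0
  refine ⟨hD.of_isClosed_subset hCclosed hsubD, ?_⟩
  -- interior statement
  intro p hp
  have hQ : IsCompact (Xs ∩ F ⁻¹' Icc (-1 : ℝ) 1) := hFprop _ isCompact_Icc
  have hpQ : (p, (0 : ℝ≥0)) ∉ Xs ∩ F ⁻¹' Icc (-1 : ℝ) 1 := fun h =>
    (hmem p 0).1 h.1 ⟨hp, rfl⟩
  obtain ⟨u, w, hu, hw, hpu, h0w, huw⟩ :=
    isOpen_prod_iff.1 hQ.isClosed.isOpen_compl p 0 hpQ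
  obtain ⟨ε, hε, hIw⟩ : ∃ ε : ℝ≥0, 0 < ε ∧ Iio ε ⊆ w := by
    obtain ⟨ε, hε, h⟩ := exists_Ico_subset_of_mem_nhds (hw.mem_nhds h0w) ⟨1, one_pos⟩
    exact ⟨ε, hε, fun t ht => h ⟨zero_le, ht⟩⟩
  obtain ⟨U, hUu, hUopen, hpU, hUconn⟩ :=
    locallyConnectedSpace_iff_subsets_isOpen_isConnected.1 ‹LocallyConnectedSpace I› p u
      (hu.mem_nhds hpu)
  set W := U ×ˢ Iio ε ∩ Xs with hW
  have hWX : W ⊆ Xs := inter_subset_right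
  have hWQ : ∀ z ∈ W, F z ∉ Icc (-1 : ℝ) 1 := by
    rintro z ⟨⟨hz1, hz2⟩, hzX⟩ hFz
    exact huw ⟨hUu hz1, hIw hz2⟩ ⟨hzX, hFz⟩
  have hcore : IsPreconnected (U ×ˢ Ioo (0 : ℝ≥0) ε) :=
    hUconn.isPreconnected.prod isPreconnected_Ioo
  have hWpre : IsPreconnected W := by
    apply hcore.subset_closure
    · rintro ⟨z1, z2⟩ ⟨hz1, hz2⟩
      exact ⟨⟨hz1, hz2.2⟩, hmemt _ _ (ne_of_gt hz2.1)⟩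
    · rintro ⟨z1, z2⟩ ⟨⟨hz1, hz2⟩, hzX⟩
      rw [closure_prod_eq]
      refine ⟨subset_closure hz1, ?_⟩
      rw [closure_Ioo (ne_of_lt hε)]
      exact ⟨zero_le, le_of_lt hz2⟩
  have hFW : IsPreconnected (F '' W) := hWpre.image F (hFc.mono hWX)
  obtain ⟨t₀, ht₀0, ht₀ε, ht₀F⟩ := hPfiber p hp ε hε
  have hmemp : (p, t₀) ∈ W := ⟨⟨hpU, ht₀ε⟩, hmemt _ _ (ne_of_gt ht₀0)⟩
  have hWpos : ∀ z ∈ W, 0 ≤ F z := by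
    intro z hz
    by_contra hneg
    push_neg at hneg
    have hz1 : F z < -1 := by
      rcases lt_or_ge (F z) (-1 : ℝ) with h | h
      · exact h
      · exact absurd ⟨h, by linarith⟩ (hWQ z hz)
    have h0mem : (0 : ℝ) ∈ Icc (F z) (F (p, t₀)) := ⟨by linarith, by linarith⟩
    have hsub := hFW.ordConnected.out (mem_image_of_mem F hz) (mem_image_of_mem F hmemp)
    obtain ⟨z', hz', hFz'⟩ := hsub h0mem
    refine hWQ z' hz' ?_
    rw [hFz']
    exact ⟨by norm_num, by norm_num⟩
  rw [mem_interior]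
  refine ⟨U, ?_, hUopen, hpU⟩
  intro y hy
  rw [hC]
  by_cases hyP : y ∈ P
  · exact Or.inl hyP
  · exact Or.inr ⟨hyP, hWpos (y, 0) ⟨⟨hy, hε⟩, hmem0 y hyP⟩⟩
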